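/- Let ψ₀ := ((|0⟩+|1⟩)/√2)^{⊗3} ∈ (ℂ²)^{⊗3} and for t ∈ ℝ let ψ(t) := exp(−itH_zz)ψ₀. Then the three-tangle satisfies τ(ψ(t)) = (1/16)·|(e^{6it} − e^{−2it})² + 16 sin²(2t)| for all t; moreover τ(ψ(t)) ≤ 1 for all t and τ(ψ(π/4)) = 1. In particular, the free Ising evolution exp(−iH_zz·π/4) is a perfect distributed entangler, mapping the separable symmetric state ψ₀ to a state of maximal distributed entanglement τ = 1. -/

import Mathlib

open Matrix Complex

noncomputable section

/-- Index type for three qubits: `(ℂ²)^{⊗3} ≅ ℂ⁸` with basis `|jkl⟩`. -/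
abbrev Q3 := Fin 2 × Fin 2 × Fin 2

/-- Pauli matrix σx. -/
def sx : Matrix (Fin 2) (Fin 2) ℂ := !![0, 1; 1, 0]
/-- Pauli matrix σy. -/
def sy : Matrix (Fin 2) (Fin 2) ℂ := !![0, I; -I, 0]
/-- Pauli matrix σz. -/
def sz : Matrix (Fin 2) (Fin 2) ℂ := !![1, 0; 0, -1]

/-- Tensor (Kronecker) product of three 2×2 matrices, as an 8×8 matrix. -/
def tens3 (A B C : Matrix (Fin 2) (Fin 2) ℂ) : Matrix Q3 Q3 ℂ :=
  fun p q => A p.1 q.1 * B p.2.1 q.2.1 * C p.2.2 q.2.2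

/-- Computational basis vector `|jkl⟩`. -/
def ket (j k l : Fin 2) : Q3 → ℂ := fun p => if p = (j, k, l) then 1 else 0

/-- φ₀ = |000⟩. -/
def phi0 : Q3 → ℂ := ket 0 0 0
/-- φ₁ = |100⟩+|010⟩+|001⟩. -/
def phi1 : Q3 → ℂ := ket 1 0 0 + ket 0 1 0 + ket 0 0 1
/-- φ₂ = |110⟩+|011⟩+|101⟩. -/
def phi2 : Q3 → ℂ := ket 1 1 0 + ket 0 1 1 + ket 1 0 1
/-- φ₃ = |111⟩. -/
def phi3 : Q3 → ℂ := ket 1 1 1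

/-- The three-tangle (distributed entanglement) τ of a three-qubit pure state with
computational-basis coefficients t_{ijk} = ψ(i,j,k):
τ = 4|t₀₀₀²t₁₁₁² + t₀₀₁²t₁₁₀² + t₀₁₀²t₁₀₁² + t₁₀₀²t₀₁₁² − 2d₁ + 4d₂|. -/
def tau (ψ : Q3 → ℂ) : ℝ :=
  4 * ‖
    (ψ (0,0,0))^2 * (ψ (1,1,1))^2 + (ψ (0,0,1))^2 * (ψ (1,1,0))^2
    + (ψ (0,1,0))^2 * (ψ (1,0,1))^2 + (ψ (1,0,0))^2 * (ψ (0,1,1))^2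
    - 2 * (ψ (0,0,0) * ψ (1,1,1) * ψ (0,1,1) * ψ (1,0,0)
         + ψ (0,0,0) * ψ (1,1,1) * ψ (1,0,1) * ψ (0,1,0)
         + ψ (0,0,0) * ψ (1,1,1) * ψ (1,1,0) * ψ (0,0,1)
         + ψ (0,1,1) * ψ (1,0,0) * ψ (1,0,1) * ψ (0,1,0)
         + ψ (0,1,1) * ψ (1,0,0) * ψ (1,1,0) * ψ (0,0,1)
         + ψ (1,0,1) * ψ (0,1,0) * ψ (1,1,0) * ψ (0,0,1))
    + 4 * (ψ (0,0,0) * ψ (1,1,0) * ψ (1,0,1) * ψ (0,1,1)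
         + ψ (1,1,1) * ψ (0,0,1) * ψ (0,1,0) * ψ (1,0,0))‖

/-- H_zz = σz⊗σz⊗1 + 1⊗σz⊗σz + σz⊗1⊗σz. -/
def Hzz : Matrix Q3 Q3 ℂ := tens3 sz sz 1 + tens3 1 sz sz + tens3 sz 1 sz

/-- Tensor product of three vectors in ℂ². -/
def tensv (α β γ : Fin 2 → ℂ) : Q3 → ℂ := fun p => α p.1 * β p.2.1 * γ p.2.2

/-- The one-qubit state (|0⟩+|1⟩)/√2. -/
def uplus : Fin 2 → ℂ := fun _ => ((Real.sqrt 2 : ℂ))⁻¹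

/-- ψ₀ = ((|0⟩+|1⟩)/√2)^{⊗3}. -/
def psi0 : Q3 → ℂ := tensv uplus uplus uplus

/-- ψ(t) = e^{−itH_zz} ψ₀. -/
def psit (t : ℝ) : Q3 → ℂ :=
  (NormedSpace.exp ((-(Complex.I) * (t : ℂ)) • Hzz)).mulVec psi0

-- ==== auxiliary ====

def dvec : Q3 → ℂ := fun p => if p = ((0:Fin 2),(0:Fin 2),(0:Fin 2)) ∨ p = (1,1,1) then 3 else -1

lemma Hzz_diag : Hzz = Matrix.diagonal dvec := by
  ext ⟨j,k,l⟩ ⟨j',k',l'⟩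
  fin_cases j <;> fin_cases k <;> fin_cases l <;> fin_cases j' <;> fin_cases k' <;> fin_cases l' <;>
    simp [Hzz, tens3, sz, dvec, Matrix.diagonal, Matrix.one_apply, Prod.ext_iff] <;> norm_num

lemma psit_apply (t : ℝ) (p : Q3) :
    psit t p = Complex.exp (-(Complex.I) * (t:ℂ) * dvec p) * ((Real.sqrt 2 : ℂ))⁻¹ ^ 3 := by
  have hfun : NormedSpace.exp ((-(Complex.I) * (t:ℂ)) • dvec)
      = fun q => Complex.exp (-(Complex.I) * (t:ℂ) * dvec q) := by
    funext q
    rw [Pi.coe_exp]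
    simp [← Complex.exp_eq_exp_ℂ, smul_eq_mul]
  unfold psit
  rw [Hzz_diag, ← Matrix.diagonal_smul, Matrix.exp_diagonal, hfun, Matrix.mulVec_diagonal]
  simp [psi0, tensv, uplus]
  ring

/-- The key complex quantity: `Z(t) = e^{-12it} - 6e^{-4it} - 3e^{4it} + 8`. -/
def Zfun (t : ℝ) : ℂ :=
  Complex.exp (-(12:ℂ)*Complex.I*(t:ℂ)) - 6*Complex.exp (-(4:ℂ)*Complex.I*(t:ℂ))
    - 3*Complex.exp ((4:ℂ)*Complex.I*(t:ℂ)) + 8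

lemma exp_w (t : ℝ) (n : ℕ) :
    Complex.exp (-(n:ℂ)*Complex.I*(t:ℂ)) = (Complex.exp (Complex.I*(t:ℂ)) ^ n)⁻¹ := by
  rw [← Complex.exp_nat_mul, ← Complex.exp_neg]; congr 1; ring

lemma exp_w' (t : ℝ) (n : ℕ) :
    Complex.exp ((n:ℂ)*Complex.I*(t:ℂ)) = Complex.exp (Complex.I*(t:ℂ)) ^ n := by
  rw [← Complex.exp_nat_mul]; congr 1; ring

lemma Zfun_w (t : ℝ) :
    Zfun t = (Complex.exp (Complex.I*(t:ℂ)) ^ 12)⁻¹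
      - 6*(Complex.exp (Complex.I*(t:ℂ)) ^ 4)⁻¹ - 3*Complex.exp (Complex.I*(t:ℂ)) ^ 4 + 8 := by
  have h12 := exp_w t 12
  have h4 := exp_w t 4
  have h4' := exp_w' t 4
  push_cast at h12 h4 h4'
  rw [Zfun, h12, h4, h4']

lemma inner_eq (w s : ℂ) (hw : w ≠ 0) :
    ((w^3)⁻¹*s^3)^2 * ((w^3)⁻¹*s^3)^2 + (w*s^3)^2 * (w*s^3)^2
    + (w*s^3)^2 * (w*s^3)^2 + (w*s^3)^2 * (w*s^3)^2
    - 2 * ((w^3)⁻¹*s^3 * ((w^3)⁻¹*s^3) * (w*s^3) * (w*s^3)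
         + (w^3)⁻¹*s^3 * ((w^3)⁻¹*s^3) * (w*s^3) * (w*s^3)
         + (w^3)⁻¹*s^3 * ((w^3)⁻¹*s^3) * (w*s^3) * (w*s^3)
         + w*s^3 * (w*s^3) * (w*s^3) * (w*s^3)
         + w*s^3 * (w*s^3) * (w*s^3) * (w*s^3)
         + w*s^3 * (w*s^3) * (w*s^3) * (w*s^3))
    + 4 * ((w^3)⁻¹*s^3 * (w*s^3) * (w*s^3) * (w*s^3)
         + (w^3)⁻¹*s^3 * (w*s^3) * (w*s^3) * (w*s^3))
    = s^12 * ((w^12)⁻¹ - 6*(w^4)⁻¹ - 3*w^4 + 8) := by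
  have h3 : (w^3)⁻¹ * w^3 = 1 := inv_mul_cancel₀ (pow_ne_zero _ hw)
  have h1 : (w^12)⁻¹ = ((w^3)⁻¹)^4 := by
    rw [inv_pow, ← pow_mul]
  have h2 : (w^4)⁻¹ = ((w^3)⁻¹)^2 * w^2 := by
    rw [inv_pow, ← pow_mul]
    field_simp
  rw [h1, h2]
  linear_combination (8*s^12) * h3

lemma tau_psit (t : ℝ) : tau (psit t) = (1/16) * ‖Zfun t‖ := by
  have hwne : Complex.exp (Complex.I*(t:ℂ)) ≠ 0 := Complex.exp_ne_zero _
  set w : ℂ := Complex.exp (Complex.I*(t:ℂ)) with hwdef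
  set s : ℂ := ((Real.sqrt 2 : ℂ))⁻¹ with hsdef
  have hval3 : Complex.exp (-(Complex.I) * (t:ℂ) * (3:ℂ)) = (w^3)⁻¹ := by
    have := exp_w t 3; push_cast at this
    rw [show -(Complex.I) * (t:ℂ) * (3:ℂ) = -(3:ℂ)*Complex.I*(t:ℂ) by ring, this]
  have hval1 : Complex.exp (-(Complex.I) * (t:ℂ) * (-1:ℂ)) = w := by
    rw [show -(Complex.I) * (t:ℂ) * (-1:ℂ) = Complex.I*(t:ℂ) by ring]
  have c : ∀ p : Q3, psit t p = (if p = ((0:Fin 2),(0:Fin 2),(0:Fin 2)) ∨ p = (1,1,1) then (w^3)⁻¹ else w) * s^3 := by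
    intro p
    rw [psit_apply]
    unfold dvec
    split_ifs with h
    · rw [hval3]
    · rw [hval1]
  have c000 : psit t (0,0,0) = (w^3)⁻¹ * s^3 := by rw [c]; simp
  have c111 : psit t (1,1,1) = (w^3)⁻¹ * s^3 := by rw [c]; simp
  have c001 : psit t (0,0,1) = w * s^3 := by rw [c]; simp
  have c010 : psit t (0,1,0) = w * s^3 := by rw [c]; simp
  have c100 : psit t (1,0,0) = w * s^3 := by rw [c]; simp
  have c011 : psit t (0,1,1) = w * s^3 := by rw [c]; simp
  have c101 : psit t (1,0,1) = w * s^3 := by rw [c]; simp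
  have c110 : psit t (1,1,0) = w * s^3 := by rw [c]; simp
  have hs12' : s^12 = (64:ℂ)⁻¹ := by
    have h2 : s^2 = (2:ℂ)⁻¹ := by
      rw [hsdef, inv_pow]
      congr 1
      norm_cast
      exact Real.sq_sqrt (by norm_num)
    rw [show (12:ℕ) = 2*6 from rfl, pow_mul, h2]
    norm_num
  rw [tau, c000, c111, c001, c010, c100, c011, c101, c110, inner_eq w s hwne, hs12', Zfun_w, norm_mul]
  simp only [norm_inv]
  rw [show ‖(64:ℂ)‖ = (64:ℝ) from by norm_num [Complex.norm_ofNat]]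
  ring

lemma Zfun_bound (t : ℝ) : ‖Zfun t‖ ≤ 16 := by
  have e1 : Complex.exp (-(12:ℂ)*Complex.I*(t:ℂ)) = Complex.exp (((-12*t:ℝ):ℂ)*Complex.I) := by
    congr 1; push_cast; ring
  have e2 : Complex.exp (-(4:ℂ)*Complex.I*(t:ℂ)) = Complex.exp (((-4*t:ℝ):ℂ)*Complex.I) := by
    congr 1; push_cast; ring
  have e3 : Complex.exp ((4:ℂ)*Complex.I*(t:ℂ)) = Complex.exp (((4*t:ℝ):ℂ)*Complex.I) := by
    congr 1; push_cast; ring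
  have hre : (Zfun t).re = Real.cos (-12*t) - 6*Real.cos (-4*t) - 3*Real.cos (4*t) + 8 := by
    rw [Zfun, e1, e2, e3]
    simp only [Complex.add_re, Complex.sub_re, Complex.mul_re, Complex.re_ofNat,
      Complex.im_ofNat, Complex.exp_ofReal_mul_I_re, Complex.exp_ofReal_mul_I_im]
    ring
  have him : (Zfun t).im = Real.sin (-12*t) - 6*Real.sin (-4*t) - 3*Real.sin (4*t) := by
    rw [Zfun, e1, e2, e3]
    simp only [Complex.add_im, Complex.sub_im, Complex.mul_im, Complex.re_ofNat,
      Complex.im_ofNat, Complex.exp_ofReal_mul_I_re, Complex.exp_ofReal_mul_I_im]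
    ring
  have hns : Complex.normSq (Zfun t) ≤ 256 := by
    rw [Complex.normSq_apply, hre, him]
    have h12c : Real.cos (-12*t) = 4*(Real.cos (4*t))^3 - 3*Real.cos (4*t) := by
      rw [show (-12*t:ℝ) = -(3*(4*t)) by ring, Real.cos_neg, Real.cos_three_mul]
    have h12s : Real.sin (-12*t) = -(3*Real.sin (4*t) - 4*(Real.sin (4*t))^3) := by
      rw [show (-12*t:ℝ) = -(3*(4*t)) by ring, Real.sin_neg, Real.sin_three_mul]
    have h4c : Real.cos (-4*t) = Real.cos (4*t) := by
      rw [show (-4*t:ℝ) = -(4*t) by ring, Real.cos_neg]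
    have h4s : Real.sin (-4*t) = -Real.sin (4*t) := by
      rw [show (-4*t:ℝ) = -(4*t) by ring, Real.sin_neg]
    rw [h12c, h12s, h4c, h4s]
    set cc := Real.cos (4*t)
    set ss := Real.sin (4*t)
    have hcs : ss^2 = 1 - cc^2 := by
      have := Real.sin_sq_add_cos_sq (4*t); linarith
    have h6 : ss^6 = (1-cc^2)^3 := by
      rw [show ss^6 = (ss^2)^3 by ring, hcs]
    have hc1 : -1 ≤ cc := Real.neg_one_le_cos _
    have hc2 : cc ≤ 1 := Real.cos_le_one _
    nlinarith [sq_nonneg ((1+cc)*(3*cc-5)), sq_nonneg (1+cc), h6, hc1, hc2]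
  rw [Complex.norm_def]
  calc Real.sqrt (Complex.normSq (Zfun t)) ≤ Real.sqrt 256 := Real.sqrt_le_sqrt hns
    _ = 16 := by rw [show (256:ℝ) = 16^2 by norm_num, Real.sqrt_sq (by norm_num : (0:ℝ) ≤ 16)]

lemma Zfun_pi4 : Zfun (Real.pi/4) = 16 := by
  have a1 : Complex.exp (-(12:ℂ)*Complex.I*((Real.pi/4:ℝ):ℂ)) = -1 := by
    rw [show -(12:ℂ)*Complex.I*((Real.pi/4:ℝ):ℂ) = ((-3:ℤ):ℂ)*((Real.pi:ℝ)*Complex.I) by push_cast; ring,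
        Complex.exp_int_mul, Complex.exp_pi_mul_I]
    norm_num
  have a2 : Complex.exp (-(4:ℂ)*Complex.I*((Real.pi/4:ℝ):ℂ)) = -1 := by
    rw [show -(4:ℂ)*Complex.I*((Real.pi/4:ℝ):ℂ) = ((-1:ℤ):ℂ)*((Real.pi:ℝ)*Complex.I) by push_cast; ring,
        Complex.exp_int_mul, Complex.exp_pi_mul_I]
    norm_num
  have a3 : Complex.exp ((4:ℂ)*Complex.I*((Real.pi/4:ℝ):ℂ)) = -1 := by
    rw [show (4:ℂ)*Complex.I*((Real.pi/4:ℝ):ℂ) = (Real.pi:ℝ)*Complex.I by push_cast; ring,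
        Complex.exp_pi_mul_I]
  rw [Zfun, a1, a2, a3]
  norm_num

lemma conj_Zfun (t : ℝ) :
    (Complex.exp (6 * Complex.I * (t : ℂ)) - Complex.exp (-2 * Complex.I * (t : ℂ))) ^ 2
      + 16 * ((Real.sin (2 * t) : ℂ)) ^ 2 = (starRingEnd ℂ) (Zfun t) := by
  have hwne : Complex.exp (Complex.I*(t:ℂ)) ≠ 0 := Complex.exp_ne_zero _
  set w : ℂ := Complex.exp (Complex.I*(t:ℂ)) with hwdef
  have hcw : (starRingEnd ℂ) (Complex.exp (Complex.I*(t:ℂ))) = (Complex.exp (Complex.I*(t:ℂ)))⁻¹ := by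
    rw [← Complex.exp_conj, ← Complex.exp_neg]
    congr 1
    simp [Complex.conj_ofReal]
  have e6 : Complex.exp (6 * Complex.I * (t:ℂ)) = w^6 := by
    have := exp_w' t 6; push_cast at this; rw [← this]
  have e2m : Complex.exp (-2 * Complex.I * (t:ℂ)) = (w^2)⁻¹ := by
    have := exp_w t 2; push_cast at this; rw [← this]
  have hsin : ((Real.sin (2*t) : ℝ):ℂ) = (w^2 - (w^2)⁻¹)/(2*Complex.I) := by
    have hw2 : w^2 = Complex.exp (((2*t:ℝ):ℂ)*Complex.I) := by
      rw [hwdef, ← Complex.exp_nat_mul]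
      congr 1; push_cast; ring
    have hw2' : (w^2)⁻¹ = Complex.exp ((-((2*t:ℝ):ℂ))*Complex.I) := by
      rw [hw2, ← Complex.exp_neg]; congr 1; ring
    rw [hw2', hw2, Complex.exp_mul_I, Complex.exp_mul_I, Complex.cos_neg, Complex.sin_neg,
        Complex.ofReal_sin]
    field_simp
    ring
  rw [Zfun_w t, e6, e2m, hsin]
  simp only [map_sub, map_add, _root_.map_mul, map_inv₀, map_pow, map_ofNat, hcw]
  simp only [← hwdef]
  field_simp
  ring_nf
  simp only [Complex.I_sq]
  ring


/-- the free Ising evolution of ψ₀ has three-tangle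
τ(ψ(t)) = (1/16)|(e^{6it} − e^{−2it})² + 16 sin²(2t)|, bounded by 1, with value 1 at
t = π/4: e^{−iH_zz π/4} is a perfect distributed entangler. -/
theorem statement18 :
    (∀ t : ℝ, tau (psit t) =
      (1/16) * ‖(Complex.exp (6 * Complex.I * (t : ℂ))
          - Complex.exp (-2 * Complex.I * (t : ℂ))) ^ 2
        + 16 * ((Real.sin (2 * t) : ℂ)) ^ 2‖) ∧
    (∀ t : ℝ, tau (psit t) ≤ 1) ∧
    tau (psit (Real.pi / 4)) = 1 := by
  refine ⟨fun t => ?_, fun t => ?_, ?_⟩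
  · rw [tau_psit t, conj_Zfun t, Complex.norm_conj]
  · rw [tau_psit t]
    have := Zfun_bound t
    linarith
  · rw [tau_psit, Zfun_pi4]
    norm_num [Complex.norm_ofNat]
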